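/- arXiv:2509.15093 — 2 statements merged into one kernel-verified Lean document; each statement's English description precedes it below -/
import Mathlib

section
/- Let f_j : D → X' be continuous open maps from a domain D in a locally compact metric space X to a metric space X', converging locally uniformly to f : D → X'. Suppose there exist ε₁ > 0 and r₀ > 0 with closure(B(x₀, ε₁)) compact in D such that f_j(B(x₀, ε₁)) ⊃ B(f_j(x₀), r₀) for every j. Then f(closure(B(x₀, ε₁))) ⊃ B(f(x₀), r₀/2). -/
open Metric Set Filter Topology

set_option maxHeartbeats 1000000 in
/-- If continuous open maps `f_j : D → X'` converge locally uniformly on `D` to `f`, the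
closure of `B(x₀, ε₁)` is a compact subset of `D`, and `f_j(B(x₀, ε₁)) ⊃ B(f_j(x₀), r₀)`
for every `j`, then `f(closure B(x₀, ε₁)) ⊃ B(f(x₀), r₀/2)`. -/
theorem limit_covers_half_ball {X X' : Type*} [MetricSpace X] [MetricSpace X']
    [LocallyCompactSpace X] (D : Set X) (hD : IsOpen D) (hDconn : IsConnected D)
    (f : X → X') (fj : ℕ → X → X')
    (hcont : ∀ j, ContinuousOn (fj j) D)
    (hopen : ∀ j, ∀ U ⊆ D, IsOpen U → IsOpen (fj j '' U))
    (hconv : TendstoLocallyUniformlyOn fj f atTop D)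
    (x₀ : X) (ε₁ r₀ : ℝ) (hε₁ : 0 < ε₁) (hr₀ : 0 < r₀)
    (hcomp : IsCompact (closure (ball x₀ ε₁))) (hsub : closure (ball x₀ ε₁) ⊆ D)
    (hcover : ∀ j, ball (fj j x₀) r₀ ⊆ fj j '' ball x₀ ε₁) :
    ball (f x₀) (r₀ / 2) ⊆ f '' closure (ball x₀ ε₁) := by
  set K := closure (ball x₀ ε₁) with hK
  have hx₀K : x₀ ∈ K := subset_closure (mem_ball_self hε₁)
  have hU : TendstoUniformlyOn fj f atTop K :=
    (tendstoLocallyUniformlyOn_iff_tendstoUniformlyOn_of_compact hcomp).mp (hconv.mono hsub)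
  have hcontK : ∀ j, ContinuousOn (fj j) K := fun j => (hcont j).mono hsub
  have hfcont : ContinuousOn f K := hU.continuousOn (Eventually.of_forall hcontK).frequently
  intro y hy
  have hyd : dist y (f x₀) < r₀ / 2 := mem_ball.mp hy
  -- eventually y ∈ ball (fj j x₀) r₀
  have hx0tendsto : Tendsto (fun j => fj j x₀) atTop (𝓝 (f x₀)) :=
    hU.tendsto_at hx₀K
  have hev : ∀ᶠ j in atTop, dist y (fj j x₀) < r₀ := by
    have : ∀ᶠ j in atTop, dist (fj j x₀) (f x₀) < r₀ / 2 :=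
      (hx0tendsto.eventually (Metric.ball_mem_nhds _ (by positivity)))
    filter_upwards [this] with j hj
    calc dist y (fj j x₀) ≤ dist y (f x₀) + dist (f x₀) (fj j x₀) := dist_triangle _ _ _
      _ < r₀ / 2 + r₀ / 2 := by rw [dist_comm (f x₀)]; exact add_lt_add hyd hj
      _ = r₀ := by ring
  obtain ⟨N, hN⟩ := eventually_atTop.mp hev
  -- choose preimages
  have hpre : ∀ j, ∃ x ∈ ball x₀ ε₁, fj (j + N) x = y := by
    intro j
    have : y ∈ ball (fj (j + N) x₀) r₀ := mem_ball.mpr (hN _ (Nat.le_add_left N j))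
    obtain ⟨x, hx, hfx⟩ := hcover (j + N) this
    exact ⟨x, hx, hfx⟩
  choose x hxmem hxeq using hpre
  have hxK : ∀ j, x j ∈ K := fun j => subset_closure (hxmem j)
  obtain ⟨z, hzK, φ, hφ, hzt⟩ := hcomp.tendsto_subseq hxK
  refine ⟨z, hzK, ?_⟩
  -- fj (φ k + N) (x (φ k)) → f z
  have hφN : Tendsto (fun k => φ k + N) atTop atTop :=
    tendsto_atTop_mono (fun k => Nat.le_add_right (φ k) N) hφ.tendsto_atTop
  have hU' : TendstoUniformlyOn (fun k => fj (φ k + N)) f atTop K :=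
    fun u hu => hφN.eventually (hU u hu)
  have hzt' : Tendsto (fun k => x (φ k)) atTop (𝓝[K] z) :=
    tendsto_nhdsWithin_of_tendsto_nhds_of_eventually_within _ hzt
      (Eventually.of_forall fun k => hxK (φ k))
  have hlim : Tendsto (fun k => fj (φ k + N) (x (φ k))) atTop (𝓝 (f z)) :=
    hU'.tendsto_comp (hfcont z hzK) hzt'
  have hconst : Tendsto (fun k => fj (φ k + N) (x (φ k))) atTop (𝓝 y) := by
    simp only [hxeq]; exact tendsto_const_nhds
  exact tendsto_nhds_unique hlim hconst
end

section
/- Let f : D → X' be continuous and suppose D₀ = ⋂_{k=1}^∞ closure(α([t_k, c))) where α : [0, c) → K is a path into a compact set K ⊂ D and t_k ↑ c. If f is constant on each connected subset of D₀ only when that subset is a single point (f is discrete), and f ∘ α extends continuously to [0, c], then D₀ is a nonempty, compact, connected set on which f is constant; if moreover f is discrete, the connected component of D₀ ∩ D containing any of its points is a single point. -/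
open Set Filter Topology

/-- The intersection of a decreasing sequence of nonempty compact closed connected sets
is connected. -/
theorem isConnected_iInter_of_antitone {X : Type*} [MetricSpace X] (S : ℕ → Set X)
    (hanti : Antitone S) (hne : ∀ k, (S k).Nonempty) (hcpt : ∀ k, IsCompact (S k))
    (hcl : ∀ k, IsClosed (S k)) (hconn : ∀ k, IsConnected (S k)) :
    IsConnected (⋂ k, S k) := by
  have hD₀ne : (⋂ k, S k).Nonempty :=
    IsCompact.nonempty_iInter_of_sequence_nonempty_isCompact_isClosed S
      (fun i => hanti i.le_succ) hne (hcpt 0) hcl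
  refine ⟨hD₀ne, ?_⟩
  intro U V hU hV hcov ⟨a, haD, haU⟩ ⟨b, hbD, hbV⟩
  by_contra hUV
  rw [Set.not_nonempty_iff_eq_empty] at hUV
  -- Closed pieces of the disconnection
  set A : Set X := (⋂ k, S k) \ V with hA
  set B : Set X := (⋂ k, S k) \ U with hB
  have hD₀cl : IsClosed (⋂ k, S k) := isClosed_iInter hcl
  have hAcl : IsClosed A := hD₀cl.sdiff hV
  have hBcl : IsClosed B := hD₀cl.sdiff hU
  have hdisj : Disjoint A B := by
    rw [Set.disjoint_left]
    rintro x ⟨hx, hxV⟩ ⟨_, hxU⟩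
    rcases hcov hx with h | h
    · exact hxU h
    · exact hxV h
  obtain ⟨U', V', hU', hV', hAU', hBV', hU'V'⟩ := normal_separation hAcl hBcl hdisj
  have hnhds : ∀ x ∈ ⋂ k, S k, U' ∪ V' ∈ 𝓝 x := by
    intro x hx
    rcases hcov hx with h | h
    · rcases Classical.em (x ∈ V) with hv | hv
      · have : x ∈ B := ⟨hx, fun hu => by
          have : x ∈ (⋂ k, S k) ∩ (U ∩ V) := ⟨hx, hu, hv⟩
          rw [hUV] at this; exact this.elim⟩
        exact (hU'.union hV').mem_nhds (Or.inr (hBV' this))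
      · exact (hU'.union hV').mem_nhds (Or.inl (hAU' ⟨hx, hv⟩))
    · rcases Classical.em (x ∈ U) with hu | hu
      · have : x ∈ A := ⟨hx, fun hv => by
          have : x ∈ (⋂ k, S k) ∩ (U ∩ V) := ⟨hx, hu, hv⟩
          rw [hUV] at this; exact this.elim⟩
        exact (hU'.union hV').mem_nhds (Or.inl (hAU' this))
      · exact (hU'.union hV').mem_nhds (Or.inr (hBV' ⟨hx, hu⟩))
  obtain ⟨k, hk⟩ := exists_subset_nhds_of_isCompact' hanti.directed_ge hcpt hcl hnhds
  have haA : a ∈ A := ⟨haD, fun hv => by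
    have : a ∈ (⋂ k, S k) ∩ (U ∩ V) := ⟨haD, haU, hv⟩
    rw [hUV] at this; exact this.elim⟩
  have hbB : b ∈ B := ⟨hbD, fun hu => by
    have : b ∈ (⋂ k, S k) ∩ (U ∩ V) := ⟨hbD, hu, hbV⟩
    rw [hUV] at this; exact this.elim⟩
  have := (hconn k).isPreconnected U' V' hU' hV' hk
    ⟨a, Set.mem_iInter.1 haD k, hAU' haA⟩ ⟨b, Set.mem_iInter.1 hbD k, hBV' hbB⟩
  rcases this with ⟨w, _, hwU', hwV'⟩
  exact (hU'V'.le_bot ⟨hwU', hwV'⟩)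

/-- A point of a preconnected set with at least two points is in the closure of the rest. -/
theorem mem_closure_diff_singleton_of_preconnected {X : Type*} [MetricSpace X]
    {C : Set X} (hC : IsPreconnected C) {x z : X} (hx : x ∈ C) (hz : z ∈ C) (hzx : z ≠ x) :
    x ∈ closure (C \ {x}) := by
  by_contra h
  rw [mem_closure_iff] at h
  push_neg at h
  obtain ⟨U, hUopen, hxU, hU⟩ := h
  have hcov : C ⊆ U ∪ {x}ᶜ := by
    intro y hy
    rcases Classical.em (y = x) with rfl | hne
    · exact Or.inl hxU
    · exact Or.inr hne
  obtain ⟨w, hwC, hwU, hwx⟩ := hC U ({x}ᶜ) hUopen isClosed_singleton.isOpen_compl hcov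
    ⟨x, hx, hxU⟩ ⟨z, hz, hzx⟩
  exact hU.subset ⟨hwU, hwC, hwx⟩

/-- Let `α : [0, c) → K` be a path into a compact `K ⊆ D`, `t_k ↑ c`, and
`D₀ = ⋂_k closure(α([t_k, c)))`. If `f : D → X'` is continuous and `f ∘ α` extends
continuously to `[0, c]`, then `D₀` is a nonempty compact connected set on which `f` is
constant; if moreover `f` is discrete (no fibre accumulates in `D`), then the connected
component of any point of `D₀` in `D₀` is a singleton. -/
theorem limit_set_of_path_tail {X X' : Type*} [MetricSpace X] [MetricSpace X']
    (D : Set X) (hD : IsOpen D) (K : Set X) (hK : IsCompact K) (hKD : K ⊆ D)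
    (c : ℝ) (hc : 0 < c) (α : ℝ → X) (hα : ContinuousOn α (Ico 0 c))
    (hαK : ∀ s ∈ Ico (0:ℝ) c, α s ∈ K)
    (t : ℕ → ℝ) (ht0 : 0 ≤ t 0) (htmono : Monotone t) (htlt : ∀ k, t k < c)
    (htlim : Tendsto t atTop (nhds c))
    (f : X → X') (hf : ContinuousOn f D)
    (hext : ∃ β : ℝ → X', ContinuousOn β (Icc 0 c) ∧ ∀ s ∈ Ico (0:ℝ) c, β s = f (α s)) :
    ((⋂ k, closure (α '' Ico (t k) c)).Nonempty ∧
      IsCompact (⋂ k, closure (α '' Ico (t k) c)) ∧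
      IsConnected (⋂ k, closure (α '' Ico (t k) c)) ∧
      ∀ x ∈ ⋂ k, closure (α '' Ico (t k) c), ∀ x' ∈ ⋂ k, closure (α '' Ico (t k) c),
        f x = f x') ∧
    ((∀ (y : X') (x : X), x ∈ D → ¬ AccPt x (Filter.principal (f ⁻¹' {y}))) →
      ∀ x ∈ ⋂ k, closure (α '' Ico (t k) c),
        connectedComponentIn (⋂ k, closure (α '' Ico (t k) c)) x = {x}) := by
  obtain ⟨β, hβ, hβα⟩ := hext
  set S : ℕ → Set X := fun k => closure (α '' Ico (t k) c) with hS
  have htk0 : ∀ k, 0 ≤ t k := fun k => le_trans ht0 (htmono (Nat.zero_le k))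
  have hsub : ∀ k, Ico (t k) c ⊆ Ico 0 c := fun k s hs => ⟨le_trans (htk0 k) hs.1, hs.2⟩
  have himK : ∀ k, α '' Ico (t k) c ⊆ K := by
    rintro k _ ⟨s, hs, rfl⟩; exact hαK s (hsub k hs)
  have hSK : ∀ k, S k ⊆ K := fun k => closure_minimal (himK k) hK.isClosed
  have hScl : ∀ k, IsClosed (S k) := fun k => isClosed_closure
  have hScpt : ∀ k, IsCompact (S k) := fun k => hK.of_isClosed_subset (hScl k) (hSK k)
  have hSne : ∀ k, (S k).Nonempty := fun k =>
    (((Set.nonempty_Ico.2 (htlt k)).image α)).closure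
  have hSconn : ∀ k, IsConnected (S k) := fun k =>
    ⟨hSne k, ((isPreconnected_Ico.image α (hα.mono (hsub k))).closure)⟩
  have hanti : Antitone S := fun j k hjk =>
    closure_mono (Set.image_mono (Set.Ico_subset_Ico (htmono hjk) le_rfl))
  have hD₀conn : IsConnected (⋂ k, S k) :=
    isConnected_iInter_of_antitone S hanti hSne hScpt hScl hSconn
  have hD₀K : (⋂ k, S k) ⊆ K := (Set.iInter_subset S 0).trans (hSK 0)
  have hD₀cpt : IsCompact (⋂ k, S k) :=
    hK.of_isClosed_subset (isClosed_iInter hScl) hD₀K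
  -- f is constantly β c on the limit set
  have hconst : ∀ x ∈ ⋂ k, S k, f x = β c := by
    intro x hx
    have hxD : x ∈ D := hKD (hD₀K hx)
    have hfx : ContinuousAt f x := hf.continuousAt (hD.mem_nhds hxD)
    rw [← dist_eq_zero]
    by_contra hne
    have hpos : 0 < dist (f x) (β c) := lt_of_le_of_ne dist_nonneg (Ne.symm hne)
    set ε := dist (f x) (β c) / 2 with hε
    have hεpos : 0 < ε := by positivity
    -- continuity of f at x
    rw [Metric.continuousAt_iff] at hfx
    obtain ⟨δ, hδpos, hδ⟩ := hfx ε hεpos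
    -- continuity of β at c within Icc 0 c
    have hβc : ContinuousWithinAt β (Icc 0 c) c := hβ c ⟨hc.le, le_rfl⟩
    rw [Metric.continuousWithinAt_iff] at hβc
    obtain ⟨δ', hδ'pos, hδ'⟩ := hβc ε hεpos
    -- choose k with c - t k < δ'
    have : ∀ᶠ k in atTop, dist (t k) c < δ' :=
      (htlim.eventually (Metric.ball_mem_nhds c hδ'pos) : _)
    obtain ⟨k, hk⟩ := this.exists
    -- choose s ∈ Ico (t k) c with α s close to x
    have hxk : x ∈ S k := Set.mem_iInter.1 hx k
    obtain ⟨y, ⟨s, hs, rfl⟩, hy⟩ := Metric.mem_closure_iff.1 hxk δ hδpos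
    have hsIco : s ∈ Ico (0:ℝ) c := hsub k hs
    have h1 : dist (f x) (f (α s)) < ε := by
      rw [dist_comm] at hy
      rw [dist_comm]; exact hδ hy
    have hsδ' : dist s c < δ' := by
      rw [Real.dist_eq, abs_of_nonpos (by linarith [hs.2])]
      have := hk
      rw [Real.dist_eq, abs_of_nonpos (by linarith [htlt k])] at this
      linarith [hs.1]
    have h2 : dist (β s) (β c) < ε := hδ' ⟨hsIco.1, hsIco.2.le⟩ hsδ'
    rw [hβα s hsIco] at h2
    have := dist_triangle (f x) (f (α s)) (β c)
    rw [hε] at h1 h2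
    linarith
  refine ⟨⟨hD₀conn.nonempty, hD₀cpt, hD₀conn, fun x hx x' hx' => by
    rw [hconst x hx, hconst x' hx']⟩, ?_⟩
  -- discreteness part
  intro hdisc x hx
  by_contra hne
  have hxC : x ∈ connectedComponentIn (⋂ k, S k) x := mem_connectedComponentIn hx
  have hCsub : connectedComponentIn (⋂ k, S k) x ⊆ ⋂ k, S k :=
    connectedComponentIn_subset _ _
  have hCconn : IsPreconnected (connectedComponentIn (⋂ k, S k) x) :=
    isPreconnected_connectedComponentIn
  -- the component has a second point
  have : ∃ z ∈ connectedComponentIn (⋂ k, S k) x, z ≠ x := by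
    by_contra h
    push_neg at h
    exact hne (Set.eq_singleton_iff_unique_mem.2 ⟨hxC, h⟩)
  obtain ⟨z, hzC, hzx⟩ := this
  have hacc : AccPt x (𝓟 (f ⁻¹' {f x})) := by
    rw [accPt_principal_iff_clusterPt]
    have hclos : x ∈ closure (connectedComponentIn (⋂ k, S k) x \ {x}) :=
      mem_closure_diff_singleton_of_preconnected hCconn hxC hzC hzx
    have hsub' : connectedComponentIn (⋂ k, S k) x \ {x} ⊆ f ⁻¹' {f x} \ {x} := by
      rintro w ⟨hwC, hwx⟩
      refine ⟨?_, hwx⟩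
      have := hconst w (hCsub hwC)
      rw [Set.mem_preimage, Set.mem_singleton_iff, this, hconst x hx]
    have := mem_closure_iff_clusterPt.1 (closure_mono hsub' hclos)
    exact this
  exact hdisc (f x) x (hKD (hD₀K hx)) hacc
end
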